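/- Let 1 ≤ k ≤ n and let A = {χ_S : S ⊆ {1,...,n}, |S| = k} ⊆ ℤ^n be the set of vertices of the hypersimplex Δ(k,n). Then A is normal: every element of the subgroup of (ℤ^n,+) generated by A whose image in ℝ^n lies in the convex cone of nonnegative real combinations of A already belongs to the additive submonoid generated by A. -/

import Mathlib

/-- Auxiliary combinatorial lemma: a nonnegative integer vector with entries at most `m`
and coordinate sum `k * m` is a sum of `m` indicator vectors of `k`-subsets. -/
lemma hypersimplex_aux (n k : ℕ) (hk1 : 1 ≤ k) (m : ℕ) :
    ∀ z : Fin n → ℤ, (∀ i, 0 ≤ z i) → (∀ i, z i ≤ (m : ℤ)) →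
    (∑ i, z i) = (k : ℤ) * m →
    z ∈ AddSubmonoid.closure {a : Fin n → ℤ |
      ∃ S : Finset (Fin n), S.card = k ∧ a = fun i => if i ∈ S then 1 else 0} := by
  induction m with
  | zero =>
    intro z h0 hm _
    have : z = 0 := funext fun i => le_antisymm (by simpa using hm i) (h0 i)
    rw [this]; exact zero_mem _
  | succ m ih =>
    intro z h0 hm hsum
    set T : Finset (Fin n) := Finset.univ.filter (fun i => z i = (m : ℤ) + 1) with hT
    set P : Finset (Fin n) := Finset.univ.filter (fun i => 1 ≤ z i) with hP
    have hTP : T ⊆ P := by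
      intro i hi
      simp only [hT, Finset.mem_filter] at hi
      simp only [hP, Finset.mem_filter]
      refine ⟨Finset.mem_univ i, ?_⟩
      rw [hi.2]; omega
    have hsumT : ∑ i ∈ T, z i = (T.card : ℤ) * ((m : ℤ) + 1) := by
      rw [Finset.sum_congr rfl (fun i hi => by
        simp only [hT, Finset.mem_filter] at hi; exact hi.2)]
      rw [Finset.sum_const, nsmul_eq_mul]
    have hTk : T.card ≤ k := by
      have h1 : (T.card : ℤ) * ((m : ℤ) + 1) ≤ (k : ℤ) * ((m : ℤ) + 1) := by
        rw [← hsumT]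
        calc ∑ i ∈ T, z i ≤ ∑ i, z i :=
              Finset.sum_le_sum_of_subset_of_nonneg (Finset.subset_univ T)
                (fun i _ _ => h0 i)
          _ = (k : ℤ) * ((m : ℤ) + 1) := by rw [hsum]; push_cast; ring
      have := le_of_mul_le_mul_right h1 (by positivity : (0:ℤ) < (m : ℤ) + 1)
      exact_mod_cast this
    have hPk : k ≤ P.card := by
      have h1 : (k : ℤ) * ((m : ℤ) + 1) ≤ (P.card : ℤ) * ((m : ℤ) + 1) := by
        have hsub : ∑ i, z i = ∑ i ∈ P, z i := by
          refine (Finset.sum_subset (Finset.subset_univ P) ?_).symm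
          intro i _ hi
          simp only [hP, Finset.mem_filter, Finset.mem_univ, true_and, not_le] at hi
          have := h0 i; omega
        calc (k : ℤ) * ((m : ℤ) + 1) = ∑ i, z i := by rw [hsum]; push_cast; ring
          _ = ∑ i ∈ P, z i := hsub
          _ ≤ ∑ i ∈ P, ((m : ℤ) + 1) := Finset.sum_le_sum (fun i _ => by
              have := hm i; omega)
          _ = (P.card : ℤ) * ((m : ℤ) + 1) := by
              rw [Finset.sum_const, nsmul_eq_mul]
      have := le_of_mul_le_mul_right h1 (by positivity : (0:ℤ) < (m : ℤ) + 1)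
      exact_mod_cast this
    obtain ⟨S, hTS, hSP, hScard⟩ := Finset.exists_subsuperset_card_eq (n := k)
      hTP hTk hPk
    have hSk : S.card = k := by omega
    set χ : Fin n → ℤ := fun i => if i ∈ S then 1 else 0 with hχ
    have hχsum : ∑ i, χ i = (S.card : ℤ) := by
      simp [hχ, Finset.sum_ite_mem]
    have hχmem : χ ∈ AddSubmonoid.closure {a : Fin n → ℤ |
        ∃ S : Finset (Fin n), S.card = k ∧ a = fun i => if i ∈ S then 1 else 0} :=
      AddSubmonoid.subset_closure ⟨S, hSk, rfl⟩
    set w : Fin n → ℤ := fun i => z i - χ i with hw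
    have hw0 : ∀ i, 0 ≤ w i := by
      intro i
      simp only [hw, hχ]
      by_cases hiS : i ∈ S
      · have h1 : 1 ≤ z i := by
          have := Finset.mem_filter.mp (hSP hiS)
          exact this.2
        simp [hiS]; omega
      · simp [hiS]; exact h0 i
    have hwm : ∀ i, w i ≤ (m : ℤ) := by
      intro i
      simp only [hw, hχ]
      by_cases hiS : i ∈ S
      · have h1 := hm i
        simp [hiS]; omega
      · have hiT : i ∉ T := fun h => hiS (hTS h)
        simp only [hT, Finset.mem_filter, Finset.mem_univ, true_and] at hiT
        have := hm i
        simp [hiS]; omega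
    have hwsum : ∑ i, w i = (k : ℤ) * m := by
      simp only [hw, Finset.sum_sub_distrib, hχsum, hsum, hSk]
      push_cast; ring
    have hwmem := ih w hw0 hwm hwsum
    have : z = w + χ := by funext i; simp [hw]
    rw [this]
    exact add_mem hwmem hχmem

/-- The vertex set `A = {χ_S : |S| = k} ⊆ ℤⁿ` of the hypersimplex
`Δ(k,n)` is normal: every element of the subgroup of `(ℤⁿ,+)` generated by `A` whose
image in `ℝⁿ` lies in the cone of nonnegative real combinations of `A` already belongs
to the additive submonoid generated by `A`. -/
theorem hypersimplex_vertices_normal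
    (n k : ℕ) (hk1 : 1 ≤ k) (hkn : k ≤ n)
    (A : Set (Fin n → ℤ))
    (hA : A = {a : Fin n → ℤ |
      ∃ S : Finset (Fin n), S.card = k ∧ a = fun i => if i ∈ S then 1 else 0})
    (z : Fin n → ℤ) (hz : z ∈ AddSubgroup.closure A)
    (hcone : (fun i => (z i : ℝ)) ∈
      Submodule.span NNReal ((fun a : Fin n → ℤ => fun i => (a i : ℝ)) '' A)) :
    z ∈ AddSubmonoid.closure A := by
  -- Step 1: divisibility of the coordinate sum, from the subgroup condition.
  have hdvd : (k : ℤ) ∣ ∑ i, z i := by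
    let D : AddSubgroup (Fin n → ℤ) :=
      { carrier := {v | (k : ℤ) ∣ ∑ i, v i}
        zero_mem' := by simp
        add_mem' := by
          intro a b ha hb
          simp only [Set.mem_setOf_eq, Pi.add_apply, Finset.sum_add_distrib] at *
          exact dvd_add ha hb
        neg_mem' := by
          intro a ha
          simp only [Set.mem_setOf_eq, Pi.neg_apply, Finset.sum_neg_distrib] at *
          exact dvd_neg.mpr ha }
    have hle : AddSubgroup.closure A ≤ D := by
      rw [AddSubgroup.closure_le]
      intro a ha
      rw [hA] at ha
      obtain ⟨S, hS, rfl⟩ := ha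
      show (k : ℤ) ∣ ∑ i, (if i ∈ S then (1:ℤ) else 0)
      rw [show ∑ i, (if i ∈ S then (1:ℤ) else 0) = (S.card : ℤ) by
        simp [Finset.sum_ite_mem]]
      rw [hS]
    exact hle hz
  -- Step 2: inequalities from the cone condition.
  have hineq : ∀ i, 0 ≤ z i ∧ (k : ℤ) * z i ≤ ∑ j, z j := by
    let C : Submodule NNReal (Fin n → ℝ) :=
      { carrier := {x | ∀ i, 0 ≤ x i ∧ (k : ℝ) * x i ≤ ∑ j, x j}
        zero_mem' := by intro i; simp
        add_mem' := by
          intro a b ha hb i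
          obtain ⟨ha1, ha2⟩ := ha i
          obtain ⟨hb1, hb2⟩ := hb i
          constructor
          · exact add_nonneg ha1 hb1
          · simp only [Pi.add_apply, Finset.sum_add_distrib, mul_add]
            exact add_le_add ha2 hb2
        smul_mem' := by
          intro c x hx i
          obtain ⟨h1, h2⟩ := hx i
          have hc : (0:ℝ) ≤ (c : ℝ) := c.2
          constructor
          · simp only [Pi.smul_apply, NNReal.smul_def, smul_eq_mul]
            exact mul_nonneg hc h1
          · simp only [Pi.smul_apply, NNReal.smul_def, smul_eq_mul]
            calc (k : ℝ) * ((c:ℝ) * x i) = (c:ℝ) * ((k : ℝ) * x i) := by ring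
              _ ≤ (c:ℝ) * ∑ j, x j := mul_le_mul_of_nonneg_left h2 hc
              _ = ∑ j, (c:ℝ) * x j := Finset.mul_sum _ _ _ }
    have hle : Submodule.span NNReal ((fun a : Fin n → ℤ => fun i => (a i : ℝ)) '' A)
        ≤ C := by
      rw [Submodule.span_le]
      rintro x ⟨a, ha, rfl⟩
      rw [hA] at ha
      obtain ⟨S, hS, rfl⟩ := ha
      intro i
      have hsum : ∑ j, ((if j ∈ S then (1:ℤ) else 0 : ℤ) : ℝ) = (S.card : ℝ) := by
        simp [apply_ite (Int.cast : ℤ → ℝ), Finset.sum_ite_mem]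
      constructor
      · by_cases h : i ∈ S <;> simp [h]
      · rw [hsum, hS]
        by_cases h : i ∈ S <;> simp [h]
    intro i
    have hmem := hle hcone
    have h := hmem i
    have h1 : (0:ℝ) ≤ (z i : ℝ) := h.1
    have h2 : (k:ℝ) * (z i : ℝ) ≤ ∑ j, (z j : ℝ) := h.2
    exact ⟨by exact_mod_cast h1, by exact_mod_cast h2⟩
  -- Step 3: combine.
  have h0 : ∀ i, 0 ≤ z i := fun i => (hineq i).1
  have hsnn : 0 ≤ ∑ i, z i := Finset.sum_nonneg (fun i _ => h0 i)
  obtain ⟨c, hc⟩ := hdvd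
  have hc0 : 0 ≤ c := by
    by_contra h
    push_neg at h
    have : ∑ i, z i < 0 := by
      rw [hc]
      have hk0 : (0:ℤ) < (k:ℤ) := by exact_mod_cast hk1
      exact mul_neg_of_pos_of_neg hk0 h
    omega
  set m := c.toNat with hm
  have hcm : c = (m : ℤ) := (Int.toNat_of_nonneg hc0).symm
  have hmax : ∀ i, z i ≤ (m : ℤ) := by
    intro i
    have h2 := (hineq i).2
    rw [hc, hcm] at h2
    have hk0 : (0:ℤ) < (k:ℤ) := by exact_mod_cast hk1
    nlinarith
  have hsum : ∑ i, z i = (k : ℤ) * m := by rw [hc, hcm]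
  rw [hA]
  exact hypersimplex_aux n k hk1 m z h0 hmax hsum
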